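/- (Count of minimum-weight legal paths.) Fix a circuit architecture of depth d on n qubits. The number of legal Pauli paths s = (s_0, …, s_d) with Hamming weight |s| = d + 1 equals n · 2^d · 3^{d−1}. -/

import Mathlib

/-- Labels for the four single-qubit Paulis. -/
inductive PauliLabel : Type
  | I | X | Y | Z
  deriving DecidableEq

instance instFintypePauliLabel : Fintype PauliLabel :=
  ⟨{PauliLabel.I, PauliLabel.X, PauliLabel.Y, PauliLabel.Z}, by intro x; cases x <;> simp⟩

/-- A circuit architecture of depth `d` on `n` qubits: each layer `i ∈ {1,…,d}` is a
fixed-point-free involution `M i` of the qubit set (a perfect matching); the unordered pairs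
`{j, M i j}` are the 2-qubit gates of layer `i`. -/
structure Architecture (n d : ℕ) where
  M : Fin d → Fin n → Fin n
  involutive : ∀ i j, M i (M i j) = j
  fixedPointFree : ∀ i j, M i j ≠ j

/-- A Pauli path is a tuple `s = (s_0, …, s_d)` of layers, each assigning a Pauli label to
every qubit. -/
def PauliPath (n d : ℕ) : Type := Fin (d + 1) → Fin n → PauliLabel

/-- The Hamming weight of a Pauli path: the number of pairs `(i, j)` with `s i j ≠ I`. -/
def pathWeight {n d : ℕ} (s : PauliPath n d) : ℕ :=
  (Finset.univ.filter fun p : Fin (d + 1) × Fin n => s p.1 p.2 ≠ PauliLabel.I).card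

/-- A Pauli path is legal if (1) for every layer `i ∈ {1,…,d}` and every gate `{j, M i j}`,
the input pair `(s_{i−1} j, s_{i−1} (M i j))` is `(I, I)` iff the output pair
`(s_i j, s_i (M i j))` is `(I, I)`, and (2) `s_0` and `s_d` take values only in `{I, Z}`. -/
def IsLegal {n d : ℕ} (A : Architecture n d) (s : PauliPath n d) : Prop :=
  (∀ (i : Fin d) (j : Fin n),
      ((s i.castSucc j = PauliLabel.I ∧ s i.castSucc (A.M i j) = PauliLabel.I) ↔
        (s i.succ j = PauliLabel.I ∧ s i.succ (A.M i j) = PauliLabel.I))) ∧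
  (∀ j, s 0 j = PauliLabel.I ∨ s 0 j = PauliLabel.Z) ∧
  (∀ j, s (Fin.last d) j = PauliLabel.I ∨ s (Fin.last d) j = PauliLabel.Z)

namespace CountMinWeight

open Finset

def toLabel : Fin 3 → PauliLabel := ![PauliLabel.X, PauliLabel.Y, PauliLabel.Z]

def ofLabel : PauliLabel → Fin 3
  | .I => 0
  | .X => 0
  | .Y => 1
  | .Z => 2

lemma toLabel_ne_I (k : Fin 3) : toLabel k ≠ PauliLabel.I := by
  fin_cases k <;> simp [toLabel]

lemma toLabel_ofLabel {p : PauliLabel} (h : p ≠ PauliLabel.I) : toLabel (ofLabel p) = p := by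
  cases p <;> simp_all [toLabel, ofLabel]

lemma toLabel_injective : Function.Injective toLabel := by decide

variable {n d : ℕ} (A : Architecture n d)

lemma M_inj (i : Fin d) : Function.Injective (A.M i) :=
  Function.Involutive.injective (A.involutive i)

/-- The trajectory of the single non-identity qubit. -/
def posF (j0 : Fin n) (dir : Fin d → Bool) : Fin (d + 1) → Fin n :=
  Fin.induction j0 (fun i p => if dir i then A.M i p else p)

@[simp] lemma posF_zero (j0 : Fin n) (dir : Fin d → Bool) : posF A j0 dir 0 = j0 :=
  Fin.induction_zero ..

lemma posF_succ (j0 : Fin n) (dir : Fin d → Bool) (i : Fin d) :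
    posF A j0 dir i.succ =
      if dir i then A.M i (posF A j0 dir i.castSucc) else posF A j0 dir i.castSucc :=
  Fin.induction_succ ..

/-- The label carried at each layer. -/
def lblF (lab : Fin (d - 1) → Fin 3) (i : Fin (d + 1)) : PauliLabel :=
  if h : (i : ℕ) = 0 ∨ (i : ℕ) = d then PauliLabel.Z
  else toLabel (lab ⟨(i : ℕ) - 1, by have := i.isLt; omega⟩)

lemma lblF_ne_I (lab : Fin (d - 1) → Fin 3) (i : Fin (d + 1)) : lblF lab i ≠ PauliLabel.I := by
  unfold lblF
  split
  · simp
  · exact toLabel_ne_I _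

abbrev Params (n d : ℕ) := Fin n × (Fin d → Bool) × (Fin (d - 1) → Fin 3)

def build (P : Params n d) : PauliPath n d :=
  fun i j => if j = posF A P.1 P.2.1 i then lblF P.2.2 i else PauliLabel.I

lemma build_eq_I_iff (P : Params n d) (i : Fin (d + 1)) (j : Fin n) :
    build A P i j = PauliLabel.I ↔ j ≠ posF A P.1 P.2.1 i := by
  by_cases h : j = posF A P.1 P.2.1 i <;> simp [build, h, lblF_ne_I]

lemma build_legal (P : Params n d) : IsLegal A (build A P) := by
  refine ⟨?_, ?_, ?_⟩
  · intro i j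
    rw [build_eq_I_iff, build_eq_I_iff, build_eq_I_iff, build_eq_I_iff]
    set x := posF A P.1 P.2.1 i.castSucc with hx
    have hy : posF A P.1 P.2.1 i.succ = x ∨ posF A P.1 P.2.1 i.succ = A.M i x := by
      rw [posF_succ, ← hx]
      cases P.2.1 i <;> simp
    have h1 : j = A.M i x ↔ A.M i j = x :=
      ⟨fun h => by rw [h, A.involutive], fun h => by rw [← h, A.involutive]⟩
    have h2 : A.M i j = A.M i x ↔ j = x := (M_inj A i).eq_iff
    rcases hy with hy | hy <;> rw [hy] <;> tauto
  · intro j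
    by_cases h : j = posF A P.1 P.2.1 0
    · right
      rw [build, if_pos h]
      simp [lblF]
    · left
      rw [build, if_neg h]
  · intro j
    by_cases h : j = posF A P.1 P.2.1 (Fin.last d)
    · right
      rw [build, if_pos h]
      simp [lblF]
    · left
      rw [build, if_neg h]

lemma build_weight (P : Params n d) : pathWeight (build A P) = d + 1 := by
  unfold pathWeight
  have hset : (Finset.univ.filter fun p : Fin (d + 1) × Fin n =>
        build A P p.1 p.2 ≠ PauliLabel.I)
      = Finset.univ.image (fun i : Fin (d + 1) => (i, posF A P.1 P.2.1 i)) := by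
    ext p
    simp only [mem_filter, mem_univ, true_and, mem_image, Ne, build_eq_I_iff, not_not]
    constructor
    · intro h
      exact ⟨p.1, by rw [← h]⟩
    · rintro ⟨i, rfl⟩
      rfl
  rw [hset, Finset.card_image_of_injective _ (fun a b h => congrArg Prod.fst h)]
  simp

lemma build_injective (hd : 1 ≤ d) : Function.Injective (build A) := by
  intro P Q h
  obtain ⟨j0, dir, lab⟩ := P
  obtain ⟨j0', dir', lab'⟩ := Q
  have hpos : ∀ i, posF A j0 dir i = posF A j0' dir' i := by
    intro i
    by_contra hne
    have h2 := congrFun (congrFun h i) (posF A j0 dir i)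
    simp only [build, if_true] at h2
    rw [if_neg hne] at h2
    exact lblF_ne_I lab i h2
  have hlbl : ∀ i, lblF lab i = lblF lab' i := by
    intro i
    have h2 := congrFun (congrFun h i) (posF A j0 dir i)
    simp only [build, if_true] at h2
    rw [if_pos (hpos i)] at h2
    exact h2
  have hj0 : j0 = j0' := by
    have := hpos 0
    simpa using this
  have hdir : dir = dir' := by
    funext i
    have h1 := hpos i.succ
    rw [posF_succ, posF_succ, ← hpos i.castSucc] at h1
    cases hb : dir i <;> cases hb' : dir' i <;> rw [hb, hb'] at h1 <;> simp at h1
    · exact absurd h1.symm (A.fixedPointFree i _)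
    · exact absurd h1 (A.fixedPointFree i _)
  have hlab : lab = lab' := by
    funext k
    have hk1 : (k : ℕ) + 1 < d + 1 := by have := k.isLt; omega
    have h2 := hlbl ⟨(k : ℕ) + 1, hk1⟩
    have hcond : ¬(((⟨(k : ℕ) + 1, hk1⟩ : Fin (d + 1)) : ℕ) = 0 ∨
        ((⟨(k : ℕ) + 1, hk1⟩ : Fin (d + 1)) : ℕ) = d) := by
      have := k.isLt
      simp only [Fin.val_mk]
      omega
    rw [lblF, lblF, dif_neg hcond, dif_neg hcond] at h2
    have h3 := toLabel_injective h2
    simpa using h3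
  rw [hj0, hdir, hlab]

lemma build_surjective (hd : 1 ≤ d) (s : PauliPath n d) (hleg : IsLegal A s)
    (hw : pathWeight s = d + 1) : ∃ P : Params n d, build A P = s := by
  -- each layer has at least one non-identity qubit
  have step : ∀ i : Fin d,
      (∀ j, s i.castSucc j = PauliLabel.I) ↔ (∀ j, s i.succ j = PauliLabel.I) := by
    intro i
    constructor
    · intro h j
      exact ((hleg.1 i j).mp ⟨h j, h (A.M i j)⟩).1
    · intro h j
      exact ((hleg.1 i j).mpr ⟨h j, h (A.M i j)⟩).1
  have toZero : ∀ i : Fin (d + 1),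
      (∀ j, s i j = PauliLabel.I) ↔ (∀ j, s 0 j = PauliLabel.I) := by
    intro i
    induction i using Fin.induction with
    | zero => exact Iff.rfl
    | succ i ih => exact ((step i).symm).trans ih
  have hne0 : ∀ i : Fin (d + 1), ∃ j, s i j ≠ PauliLabel.I := by
    intro i
    by_contra hcon
    push_neg at hcon
    have h0 : ∀ j, s 0 j = PauliLabel.I := (toZero i).mp hcon
    have hall : ∀ (i' : Fin (d + 1)) j, s i' j = PauliLabel.I := fun i' => (toZero i').mpr h0
    have hz : pathWeight s = 0 := by
      simp [pathWeight, hall]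
    omega
  -- the total weight splits as a sum over layers
  have hsum : pathWeight s
      = ∑ i : Fin (d + 1), (Finset.univ.filter fun j => s i j ≠ PauliLabel.I).card := by
    unfold pathWeight
    rw [Finset.card_filter, Fintype.sum_prod_type]
    simp [Finset.card_filter]
  have hcard1 : ∀ i : Fin (d + 1),
      (Finset.univ.filter fun j => s i j ≠ PauliLabel.I).card = 1 := by
    have hle : ∀ i ∈ (Finset.univ : Finset (Fin (d + 1))),
        1 ≤ (Finset.univ.filter fun j => s i j ≠ PauliLabel.I).card := by
      intro i _
      obtain ⟨j, hj⟩ := hne0 i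
      exact Finset.card_pos.mpr ⟨j, by simp [hj]⟩
    have hsum' : ∑ _i : Fin (d + 1), (1 : ℕ)
        = ∑ i : Fin (d + 1), (Finset.univ.filter fun j => s i j ≠ PauliLabel.I).card := by
      rw [← hsum, hw]
      simp
    intro i
    exact ((Finset.sum_eq_sum_iff_of_le hle).mp hsum' i (Finset.mem_univ i)).symm
  have hex : ∀ i : Fin (d + 1), ∃ a,
      (Finset.univ.filter fun j => s i j ≠ PauliLabel.I) = {a} :=
    fun i => Finset.card_eq_one.mp (hcard1 i)
  choose supp hsupp using hex
  have hmem : ∀ i j, s i j ≠ PauliLabel.I ↔ j = supp i := by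
    intro i j
    rw [← Finset.mem_singleton, ← hsupp i]
    simp
  have hI : ∀ i j, j ≠ supp i → s i j = PauliLabel.I := by
    intro i j hj
    by_contra hc
    exact hj ((hmem i j).mp hc)
  have hsne : ∀ i, s i (supp i) ≠ PauliLabel.I := fun i => (hmem i _).mpr rfl
  -- adjacency of consecutive supports
  have hadj : ∀ i : Fin d,
      supp i.succ = supp i.castSucc ∨ supp i.succ = A.M i (supp i.castSucc) := by
    intro i
    by_contra hc
    push_neg at hc
    obtain ⟨h1, h2⟩ := hc
    have e1 : s i.castSucc (supp i.succ) = PauliLabel.I := hI _ _ h1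
    have e2 : s i.castSucc (A.M i (supp i.succ)) = PauliLabel.I := by
      apply hI
      intro he
      exact h2 (by rw [← he, A.involutive])
    exact hsne i.succ ((hleg.1 i (supp i.succ)).mp ⟨e1, e2⟩).1
  -- reconstruct the parameters
  set dir : Fin d → Bool := fun i => decide (supp i.succ = A.M i (supp i.castSucc)) with hdir
  have hpos : ∀ i : Fin (d + 1), posF A (supp 0) dir i = supp i := by
    intro i
    induction i using Fin.induction with
    | zero => exact posF_zero ..
    | succ i ih =>
      rw [posF_succ, ih]
      by_cases hc : supp i.succ = A.M i (supp i.castSucc)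
      · have hb : dir i = true := by rw [hdir]; exact decide_eq_true hc
        rw [hb, if_pos rfl]
        exact hc.symm
      · have hb : dir i = false := by rw [hdir]; exact decide_eq_false hc
        rw [hb]
        simpa using ((hadj i).resolve_right hc).symm
  refine ⟨(supp 0, dir, fun k =>
    ofLabel (s ⟨(k : ℕ) + 1, by have := k.isLt; omega⟩
      (supp ⟨(k : ℕ) + 1, by have := k.isLt; omega⟩))), ?_⟩
  funext i j
  show (if j = posF A (supp 0) dir i then
      lblF (fun k => ofLabel (s ⟨(k : ℕ) + 1, by have := k.isLt; omega⟩
        (supp ⟨(k : ℕ) + 1, by have := k.isLt; omega⟩))) i else PauliLabel.I) = s i j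
  rw [hpos i]
  by_cases hj : j = supp i
  · rw [if_pos hj, hj]
    by_cases h0 : (i : ℕ) = 0 ∨ (i : ℕ) = d
    · rw [lblF, dif_pos h0]
      rcases h0 with h0 | h0
      · have hi0 : i = 0 := Fin.ext (by simpa using h0)
        rw [hi0]
        rcases hleg.2.1 (supp 0) with h | h
        · exact absurd h (hsne 0)
        · exact h.symm
      · have hil : i = Fin.last d := Fin.ext (by simpa using h0)
        rw [hil]
        rcases hleg.2.2 (supp (Fin.last d)) with h | h
        · exact absurd h (hsne _)
        · exact h.symm
    · rw [lblF, dif_neg h0]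
      have hval : (i : ℕ) - 1 + 1 = (i : ℕ) := by
        have := i.isLt
        omega
      simp only [Fin.val_mk, hval, Fin.eta]
      exact toLabel_ofLabel (hsne i)
  · rw [if_neg hj]
    exact (hI i j hj).symm

end CountMinWeight

/-- The number of legal Pauli paths of Hamming weight exactly `d + 1` equals
`n · 2^d · 3^{d−1}`. -/
theorem count_min_weight_legal_paths (n d : ℕ) (hn : Even n) (hn0 : 0 < n) (hd : 1 ≤ d)
    (A : Architecture n d) :
    Nat.card {s : PauliPath n d // IsLegal A s ∧ pathWeight s = d + 1}
      = n * 2 ^ d * 3 ^ (d - 1) := by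
  classical
  let F : CountMinWeight.Params n d →
      {s : PauliPath n d // IsLegal A s ∧ pathWeight s = d + 1} :=
    fun P => ⟨CountMinWeight.build A P,
      CountMinWeight.build_legal A P, CountMinWeight.build_weight A P⟩
  have hbij : Function.Bijective F := by
    constructor
    · intro P Q h
      exact CountMinWeight.build_injective A hd (congrArg Subtype.val h)
    · rintro ⟨s, hleg, hw⟩
      obtain ⟨P, hP⟩ := CountMinWeight.build_surjective A hd s hleg hw
      exact ⟨P, Subtype.ext hP⟩
  rw [← Nat.card_eq_of_bijective F hbij]
  simp [CountMinWeight.Params, Nat.card_eq_fintype_card, Fintype.card_fun]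
  ring
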